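/- Let A ⊂ ℕⁿ be a finite nonempty set all of whose elements have the same coordinate sum. For c ∈ ℝ^A, the point c lies in the topological interior of the copositive cone C_A in ℝ^A if and only if for every w ∈ ℝⁿ the facial restriction f_c|_w(x) = Σ_{a∈A_w} c_a x^a is strictly positive at every x ∈ ℝⁿ_{>0}, where A_w = { a ∈ A : ⟨w,a⟩ = min_{b∈A} ⟨w,b⟩ }. -/

import Mathlib

set_option maxHeartbeats 1000000
open Filter Topology Real
open scoped Classical

local notation "⟪" x ", " y "⟫" => @inner ℝ _ _ x y

private lemma bc {n : ℕ} {ι : Type*} (B : Finset ι) (V : ι → EuclideanSpace ℝ (Fin n))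
    (d : ι → ℝ) (v₀ z : EuclideanSpace ℝ (Fin n)) :
    ∑ a ∈ B, d a * rexp ⟪V a - v₀, z⟫ = (∑ a ∈ B, d a * rexp ⟪V a, z⟫) / rexp ⟪v₀, z⟫ := by
  rw [eq_div_iff (Real.exp_ne_zero _), Finset.sum_mul]
  refine Finset.sum_congr rfl fun a _ => ?_
  rw [mul_assoc, ← Real.exp_add, inner_sub_left, sub_add_cancel]

private lemma face_transfer {n : ℕ} {ι : Type*} (V : ι → EuclideanSpace ℝ (Fin n))
    (B : Finset ι) (hB : B.Nonempty) (v w : EuclideanSpace ℝ (Fin n)) :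
    ∃ w' : EuclideanSpace ℝ (Fin n),
      B.filter (fun a => ∀ b ∈ B, ⟪w', V a⟫ ≤ ⟪w', V b⟫) =
      (B.filter fun a => ∀ b ∈ B, ⟪v, V b⟫ ≤ ⟪v, V a⟫).filter
        (fun a => ∀ b ∈ (B.filter fun a => ∀ b ∈ B, ⟪v, V b⟫ ≤ ⟪v, V a⟫), ⟪w, V a⟫ ≤ ⟪w, V b⟫) := by
  classical
  set F := B.filter fun a => ∀ b ∈ B, ⟪v, V b⟫ ≤ ⟪v, V a⟫ with hF
  obtain ⟨b₀, hb₀B, hb₀max⟩ := B.exists_max_image (fun a => ⟪v, V a⟫) hB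
  have hb₀F : b₀ ∈ F := by rw [hF]; exact Finset.mem_filter.2 ⟨hb₀B, hb₀max⟩
  have hmemF : ∀ a, a ∈ F ↔ a ∈ B ∧ ∀ b ∈ B, ⟪v, V b⟫ ≤ ⟪v, V a⟫ := by
    intro a; rw [hF]; exact Finset.mem_filter
  have hFval : ∀ a ∈ F, ⟪v, V a⟫ = ⟪v, V b₀⟫ := by
    intro a ha
    rw [hmemF] at ha
    exact le_antisymm (hb₀max a ha.1) (ha.2 b₀ hb₀B)
  by_cases hBF : B \ F = ∅
  · -- F = B
    have hFB : F = B := by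
      apply Finset.Subset.antisymm (hF ▸ Finset.filter_subset _ _)
      intro a ha
      by_contra h
      exact (Finset.eq_empty_iff_forall_notMem.1 hBF a) (Finset.mem_sdiff.2 ⟨ha, h⟩)
    refine ⟨w, ?_⟩
    rw [hFB]
  · have hne : (B \ F).Nonempty := Finset.nonempty_iff_ne_empty.2 hBF
    set ε := (B \ F).inf' hne (fun a => ⟪v, V b₀⟫ - ⟪v, V a⟫) with hε
    have hεpos : 0 < ε := by
      rw [hε]
      refine (Finset.lt_inf'_iff hne).2 ?_
      intro a ha
      rw [Finset.mem_sdiff, hmemF] at ha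
      obtain ⟨haB, haF⟩ := ha
      rw [not_and] at haF
      have := haF haB
      push_neg at this
      obtain ⟨b, hbB, hab⟩ := this
      have := hb₀max b hbB
      linarith
    have hle : ∀ a ∈ B \ F, ⟪v, V a⟫ ≤ ⟪v, V b₀⟫ - ε := by
      intro a ha
      have := Finset.inf'_le (fun a => ⟪v, V b₀⟫ - ⟪v, V a⟫) ha
      rw [← hε] at this
      linarith
    set Cmax := B.sup' hB (fun b => ⟪w, V b⟫) with hCmax
    set Cmin := B.inf' hB (fun b => ⟪w, V b⟫) with hCmin
    set N := (Cmax - Cmin + 1) / ε with hN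
    have hwmax : ∀ b ∈ B, ⟪w, V b⟫ ≤ Cmax := by
      intro b hb; rw [hCmax]; exact Finset.le_sup' (fun b => ⟪w, V b⟫) hb
    have hwmin : ∀ b ∈ B, Cmin ≤ ⟪w, V b⟫ := by
      intro b hb; rw [hCmin]; exact Finset.inf'_le (fun b => ⟪w, V b⟫) hb
    have hNpos : 0 < N := by
      apply div_pos _ hεpos
      have h1 := hwmin b₀ hb₀B
      have h2 := hwmax b₀ hb₀B
      linarith
    have hNε : Cmax - Cmin + 1 = N * ε := by rw [hN, div_mul_cancel₀ _ hεpos.ne']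
    refine ⟨w - N • v, ?_⟩
    have hinner : ∀ x : EuclideanSpace ℝ (Fin n), ⟪w - N • v, x⟫ = ⟪w, x⟫ - N * ⟪v, x⟫ := by
      intro x; rw [inner_sub_left, real_inner_smul_left]
    have hkey : ∀ a ∈ B \ F, ∀ b ∈ F, ⟪w - N • v, V b⟫ < ⟪w - N • v, V a⟫ := by
      intro a ha b hb
      rw [hinner, hinner, hFval b hb]
      have h1 : ⟪v, V a⟫ ≤ ⟪v, V b₀⟫ - ε := hle a ha
      have h2 : ⟪w, V b⟫ ≤ Cmax := hwmax b ((hmemF b).1 hb).1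
      have h3 : Cmin ≤ ⟪w, V a⟫ := hwmin a (Finset.mem_sdiff.1 ha).1
      nlinarith
    skip
    ext a
    rw [Finset.mem_filter, Finset.mem_filter, hmemF]
    constructor
    · rintro ⟨haB, hmin⟩
      have haF : a ∈ F := by
        by_contra h
        have := hkey a (Finset.mem_sdiff.2 ⟨haB, h⟩) b₀ hb₀F
        exact absurd (hmin b₀ hb₀B) (not_le.2 this)
      refine ⟨(hmemF a).1 haF, ?_⟩
      intro b hb
      have hbB := ((hmemF b).1 hb).1
      have := hmin b hbB
      rw [hinner, hinner, hFval b hb, hFval a haF] at this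
      linarith
    · rintro ⟨⟨haB, hamax⟩, hminw⟩
      have haF : a ∈ F := (hmemF a).2 ⟨haB, hamax⟩
      refine ⟨haB, ?_⟩
      intro b hbB
      by_cases hbF : b ∈ F
      · have := hminw b hbF
        rw [hinner, hinner, hFval b hbF, hFval a haF]
        linarith
      · exact le_of_lt (hkey b (Finset.mem_sdiff.2 ⟨hbB, hbF⟩) a haF)

private lemma filter_inst_eq {α : Type*} (p : α → Prop) (h1 h2 : DecidablePred p)
    (s : Finset α) : @Finset.filter α p h1 s = @Finset.filter α p h2 s :=
  congrArg (fun h => @Finset.filter α p h s) (Subsingleton.elim h1 h2)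

private lemma key_aux {n : ℕ} {ι : Type*} (V : ι → EuclideanSpace ℝ (Fin n)) (c : ι → ℝ) :
    ∀ (m : ℕ) (B : Finset ι), B.card ≤ m → B.Nonempty →
      (∀ w y : EuclideanSpace ℝ (Fin n),
        0 < ∑ a ∈ B.filter fun a => ∀ b ∈ B, ⟪w, V a⟫ ≤ ⟪w, V b⟫, c a * rexp ⟪V a, y⟫) →
      ∃ δ > 0, ∀ (y : EuclideanSpace ℝ (Fin n)), ∀ a₀ ∈ B,
        δ * rexp ⟪V a₀, y⟫ ≤ ∑ a ∈ B, c a * rexp ⟪V a, y⟫ := by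
  intro m
  induction m with
  | zero =>
    intro B hcard hBne _
    rw [Nat.le_zero, Finset.card_eq_zero] at hcard
    rw [hcard] at hBne
    exact absurd hBne (by simp)
  | succ m ih =>
    intro B hcard hBne Hf
    obtain ⟨a₀, ha₀⟩ := hBne
    have hSpos : ∀ y, 0 < ∑ a ∈ B, c a * rexp ⟪V a, y⟫ := by
      intro y
      have h := Hf 0 y
      rwa [Finset.filter_true_of_mem
        (fun a _ => fun b _ => le_of_eq (by rw [inner_zero_left, inner_zero_left]))] at h
    have hDpos : ∀ y : EuclideanSpace ℝ (Fin n), 0 < ∑ b ∈ B, rexp ⟪V b, y⟫ := fun y =>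
      Finset.sum_pos (fun b _ => Real.exp_pos _) ⟨a₀, ha₀⟩
    set H : EuclideanSpace ℝ (Fin n) → ℝ :=
      fun z => (∑ a ∈ B, c a * rexp ⟪V a, z⟫) / (∑ b ∈ B, rexp ⟪V b, z⟫) with hHdef
    have hHpos : ∀ z, 0 < H z := fun z => div_pos (hSpos z) (hDpos z)
    have hHdiff : ∀ (e z : EuclideanSpace ℝ (Fin n)),
        H z = (∑ a ∈ B, c a * rexp ⟪V a - e, z⟫) / (∑ b ∈ B, rexp ⟪V b - e, z⟫) := by
      intro e z
      have e2 := bc B V (fun _ => 1) e z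
      simp only [one_mul] at e2
      simp only [hHdef]
      rw [bc B V c e z, e2, div_div_div_comm, div_self (Real.exp_ne_zero _), div_one]
    by_contra hcon
    push_neg at hcon
    have hseq : ∀ k : ℕ, ∃ y : EuclideanSpace ℝ (Fin n),
        ∑ a ∈ B, c a * rexp ⟪V a, y⟫ < (1/((k:ℝ)+1)) * ∑ b ∈ B, rexp ⟪V b, y⟫ := by
      intro k
      obtain ⟨y, b₁, hb₁B, hlt⟩ := hcon (1/((k:ℝ)+1)) (by positivity)
      refine ⟨y, lt_of_lt_of_le hlt ?_⟩
      have h1 : rexp ⟪V b₁, y⟫ ≤ ∑ b ∈ B, rexp ⟪V b, y⟫ :=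
        Finset.single_le_sum (f := fun b => rexp ⟪V b, y⟫) (fun b _ => (Real.exp_pos _).le) hb₁B
      exact mul_le_mul_of_nonneg_left h1 (by positivity)
    choose y hy using hseq
    have hHy : ∀ k, H (y k) < 1/((k:ℝ)+1) := by
      intro k
      simp only [hHdef]
      rw [div_lt_iff₀ (hDpos (y k))]
      exact hy k
    set W : Submodule ℝ (EuclideanSpace ℝ (Fin n)) :=
      Submodule.span ℝ ((fun a => V a - V a₀) '' (B : Set ι)) with hW
    set p : ℕ → EuclideanSpace ℝ (Fin n) :=
      fun k => (W.orthogonalProjectionOnto (y k) : EuclideanSpace ℝ (Fin n)) with hp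
    have hpW : ∀ k, p k ∈ W := fun k => SetLike.coe_mem _
    have hproj : ∀ a ∈ B, ∀ k, ⟪V a - V a₀, p k⟫ = ⟪V a - V a₀, y k⟫ := by
      intro a ha k
      have hmem : V a - V a₀ ∈ W := Submodule.subset_span ⟨a, Finset.mem_coe.2 ha, rfl⟩
      have horth := Submodule.sub_starProjection_mem_orthogonal (K := W) (y k)
      have h0 : ⟪V a - V a₀, y k - p k⟫ = 0 := (Submodule.mem_orthogonal W _).1 horth _ hmem
      rw [inner_sub_right] at h0
      linarith
    have hHproj : ∀ k, H (p k) = H (y k) := by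
      intro k
      rw [hHdiff (V a₀) (p k), hHdiff (V a₀) (y k)]
      congr 1
      · exact Finset.sum_congr rfl fun a ha => by rw [hproj a ha k]
      · exact Finset.sum_congr rfl fun b hb => by rw [hproj b hb k]
    have hHcont : Continuous H := by
      rw [hHdef]
      refine Continuous.div ?_ ?_ fun z => (hDpos z).ne'
      · exact continuous_finset_sum _ fun a _ => continuous_const.mul
          (Real.continuous_exp.comp (Continuous.inner continuous_const continuous_id))
      · exact continuous_finset_sum _ fun b _ =>
          Real.continuous_exp.comp (Continuous.inner continuous_const continuous_id)
    by_cases hR : ∃ R : ℝ, ∃ᶠ k in atTop, ‖p k‖ ≤ R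
    · -- bounded case
      obtain ⟨R, hfreq⟩ := hR
      obtain ⟨φ, hφmono, hφ⟩ := Filter.extraction_of_frequently_atTop hfreq
      have hmem : ∀ k, p (φ k) ∈ Metric.closedBall (0 : EuclideanSpace ℝ (Fin n)) R := by
        intro k
        rw [Metric.mem_closedBall, dist_zero_right]
        exact hφ k
      obtain ⟨ystar, -, ψ, hψmono, hψ⟩ := tendsto_subseq_of_bounded Metric.isBounded_closedBall hmem
      have h1 : Tendsto (fun k => H (p (φ (ψ k)))) atTop (𝓝 (H ystar)) :=
        (hHcont.tendsto ystar).comp hψ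
      have h2 : Tendsto (fun k => H (p (φ (ψ k)))) atTop (𝓝 0) := by
        refine squeeze_zero (fun k => (hHpos _).le) (fun k => ?_)
          tendsto_one_div_add_atTop_nhds_zero_nat
        calc H (p (φ (ψ k))) = H (y (φ (ψ k))) := hHproj _
          _ ≤ 1/((φ (ψ k) : ℝ)+1) := (hHy _).le
          _ ≤ 1/((k:ℝ)+1) := by
              apply one_div_le_one_div_of_le (by positivity)
              have h3 : k ≤ ψ k := hψmono.le_apply
              have h4 : ψ k ≤ φ (ψ k) := hφmono.le_apply
              push_cast
              have : (k:ℝ) ≤ (φ (ψ k) : ℝ) := by exact_mod_cast le_trans h3 h4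
              linarith
      exact absurd (tendsto_nhds_unique h1 h2) (hHpos ystar).ne'
    · -- unbounded case
      push_neg at hR
      have htop : Tendsto (fun k => ‖p k‖) atTop atTop := by
        rw [tendsto_atTop]
        intro R
        have h := hR R
        exact h.mono fun k hk => hk.le
      set u : ℕ → EuclideanSpace ℝ (Fin n) := fun k => ‖p k‖⁻¹ • p k with hu
      have humem : ∀ k, u k ∈ Metric.closedBall (0 : EuclideanSpace ℝ (Fin n)) 1 := by
        intro k
        rw [Metric.mem_closedBall, dist_zero_right]
        simp only [hu]
        rw [norm_smul, norm_inv, norm_norm]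
        rcases eq_or_ne (p k) 0 with h|h
        · simp [h]
        · rw [inv_mul_cancel₀ (norm_ne_zero_iff.2 h)]
      obtain ⟨v, -, φ, hφmono, hφ⟩ := tendsto_subseq_of_bounded Metric.isBounded_closedBall humem
      have hφtop : Tendsto (fun k => ‖p (φ k)‖) atTop atTop := htop.comp hφmono.tendsto_atTop
      have hv1 : ‖v‖ = 1 := by
        have hn : Tendsto (fun k => ‖u (φ k)‖) atTop (𝓝 ‖v‖) := (continuous_norm.tendsto v).comp hφ
        have he : (fun k => ‖u (φ k)‖) =ᶠ[atTop] (fun _ => (1:ℝ)) := by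
          filter_upwards [hφtop.eventually_ge_atTop 1] with k hk
          have hne : p (φ k) ≠ 0 := by
            intro h
            rw [h, norm_zero] at hk
            linarith
          simp only [hu]
          rw [norm_smul, norm_inv, norm_norm, inv_mul_cancel₀ (norm_ne_zero_iff.2 hne)]
        exact tendsto_nhds_unique (hn.congr' he) tendsto_const_nhds
      have hvW : v ∈ W := by
        have hclosed : IsClosed (W : Set (EuclideanSpace ℝ (Fin n))) :=
          Submodule.closed_of_finiteDimensional W
        refine hclosed.mem_of_tendsto hφ ?_
        filter_upwards with k
        exact W.smul_mem _ (hpW (φ k))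
      obtain ⟨bst, hbstB, hbstmax⟩ := B.exists_max_image (fun a => ⟪v, V a⟫) ⟨a₀, ha₀⟩
      set F := B.filter fun a => ∀ b ∈ B, ⟪v, V b⟫ ≤ ⟪v, V a⟫ with hF
      have hmemF : ∀ a, a ∈ F ↔ a ∈ B ∧ ∀ b ∈ B, ⟪v, V b⟫ ≤ ⟪v, V a⟫ := by
        intro a
        rw [hF]
        exact Finset.mem_filter
      have hbstF : bst ∈ F := (hmemF bst).2 ⟨hbstB, hbstmax⟩
      have hFsub : F ⊆ B := hF ▸ Finset.filter_subset _ _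
      have hFneB : F ≠ B := by
        intro hFB
        have hall : ∀ a ∈ B, ⟪V a - V a₀, v⟫ = 0 := by
          intro a ha
          have h1 : ⟪v, V a⟫ = ⟪v, V bst⟫ :=
            le_antisymm (hbstmax a ha) (((hmemF a).1 (hFB ▸ ha)).2 bst hbstB)
          have h2 : ⟪v, V a₀⟫ = ⟪v, V bst⟫ :=
            le_antisymm (hbstmax a₀ ha₀) (((hmemF a₀).1 (hFB ▸ ha₀)).2 bst hbstB)
          rw [inner_sub_left, real_inner_comm v (V a), real_inner_comm v (V a₀)]
          linarith
        have hvorth : v ∈ Wᗮ := by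
          rw [Submodule.mem_orthogonal]
          intro x hx
          induction hx using Submodule.span_induction with
          | mem x hx =>
            obtain ⟨a, ha, rfl⟩ := hx
            exact hall a (Finset.mem_coe.1 ha)
          | zero => exact inner_zero_left v
          | add x y' hx hy ihx ihy => rw [inner_add_left, ihx, ihy, add_zero]
          | smul t x hx ihx => rw [real_inner_smul_left, ihx, mul_zero]
        have hv0 : v ∈ W ⊓ Wᗮ := ⟨hvW, hvorth⟩
        rw [Submodule.inf_orthogonal_eq_bot, Submodule.mem_bot] at hv0
        rw [hv0, norm_zero] at hv1
        exact zero_ne_one hv1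
      have hFcard : F.card ≤ m := by
        have h1 : F.card < B.card :=
          Finset.card_lt_card (Finset.ssubset_iff_subset_ne.2 ⟨hFsub, hFneB⟩)
        omega
      have hFne : F.Nonempty := ⟨bst, hbstF⟩
      have HfF : ∀ w z : EuclideanSpace ℝ (Fin n),
          0 < ∑ a ∈ F.filter fun a => ∀ b ∈ F, ⟪w, V a⟫ ≤ ⟪w, V b⟫, c a * rexp ⟪V a, z⟫ := by
        intro w z
        obtain ⟨w', hw'⟩ := face_transfer V B ⟨a₀, ha₀⟩ v w
        have h := Hf w' z
        rw [hw'] at h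
        exact h
      obtain ⟨δF, hδFpos, hδF⟩ := ih F hFcard hFne HfF
      set D : EuclideanSpace ℝ (Fin n) → ℝ := fun z => ∑ b ∈ B, rexp ⟪V b - V bst, z⟫ with hD
      have hD1 : ∀ z, 1 ≤ D z := by
        intro z
        have h1 : rexp ⟪V bst - V bst, z⟫ ≤ D z := by
          simp only [hD]
          exact Finset.single_le_sum (f := fun b => rexp ⟪V b - V bst, z⟫)
            (fun b _ => (Real.exp_pos _).le) hbstB
        rwa [sub_self, inner_zero_left, Real.exp_zero] at h1
      have hDpos' : ∀ z, 0 < D z := fun z => lt_of_lt_of_le one_pos (hD1 z)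
      set r : ℕ → ι → ℝ := fun k a => rexp ⟪V a - V bst, p (φ k)⟫ / D (p (φ k)) with hr
      have hrpos : ∀ k a, 0 < r k a := fun k a => div_pos (Real.exp_pos _) (hDpos' _)
      have hrsum : ∀ k, ∑ b ∈ B, r k b = 1 := by
        intro k
        simp only [hr, hD]
        rw [← Finset.sum_div, div_self (hDpos' (p (φ k))).ne']
      have hHr : ∀ k, ∑ a ∈ B, c a * r k a = H (p (φ k)) := by
        intro k
        rw [hHdiff (V bst) (p (φ k))]
        simp only [hr, hD]
        rw [Finset.sum_div]
        exact Finset.sum_congr rfl fun a _ => (mul_div_assoc _ _ _).symm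
      have hlim_r : ∀ a ∈ B, a ∉ F → Tendsto (fun k => r k a) atTop (𝓝 0) := by
        intro a haB haF
        have hgap : ⟪V a - V bst, v⟫ < 0 := by
          have h1 : ⟪v, V a⟫ < ⟪v, V bst⟫ := by
            rw [hmemF, not_and] at haF
            have h2 := haF haB
            push_neg at h2
            obtain ⟨b, hbB, hb⟩ := h2
            exact lt_of_lt_of_le hb (hbstmax b hbB)
          rw [inner_sub_left, real_inner_comm v (V a), real_inner_comm v (V bst)]
          linarith
        have hil : Tendsto (fun k => ⟪V a - V bst, u (φ k)⟫) atTop (𝓝 ⟪V a - V bst, v⟫) :=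
          ((Continuous.inner continuous_const continuous_id).tendsto v).comp hφ
        have hev : ∀ᶠ k in atTop,
            rexp ⟪V a - V bst, p (φ k)⟫ ≤ rexp (‖p (φ k)‖ * (⟪V a - V bst, v⟫/2)) := by
          filter_upwards [hil.eventually_lt_const (by linarith : ⟪V a - V bst, v⟫ < ⟪V a - V bst, v⟫/2),
            hφtop.eventually_ge_atTop 0] with k h1 h2
          apply Real.exp_le_exp.2
          have hps : p (φ k) = ‖p (φ k)‖ • u (φ k) := by
            simp only [hu]
            rcases eq_or_ne (p (φ k)) 0 with h|h
            · simp [h]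
            · rw [smul_smul, mul_inv_cancel₀ (norm_ne_zero_iff.2 h), one_smul]
          calc ⟪V a - V bst, p (φ k)⟫ = ‖p (φ k)‖ * ⟪V a - V bst, u (φ k)⟫ := by
                rw [hps, real_inner_smul_right]
                rw [← hps]
            _ ≤ ‖p (φ k)‖ * (⟪V a - V bst, v⟫/2) := mul_le_mul_of_nonneg_left h1.le h2
        have h0 : Tendsto (fun k => rexp (‖p (φ k)‖ * (⟪V a - V bst, v⟫/2))) atTop (𝓝 0) := by
          refine Real.tendsto_exp_atBot.comp ?_
          exact hφtop.atTop_mul_const_of_neg (by linarith)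
        refine squeeze_zero' (Filter.Eventually.of_forall fun k => (hrpos k a).le) ?_ h0
        filter_upwards [hev] with k hk
        exact le_trans (div_le_self (Real.exp_pos _).le (hD1 _)) hk
      have hlim_out : ∀ (d : ι → ℝ),
          Tendsto (fun k => ∑ a ∈ B \ F, d a * r k a) atTop (𝓝 0) := by
        intro d
        have h := tendsto_finset_sum (f := fun a k => d a * r k a) (a := fun _ => (0:ℝ)) (B \ F)
          (fun a ha => by
            simpa using
              tendsto_const_nhds.mul (hlim_r a (Finset.mem_sdiff.1 ha).1 (Finset.mem_sdiff.1 ha).2))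
        simpa using h
      have hHlim : Tendsto (fun k => H (p (φ k))) atTop (𝓝 0) := by
        refine squeeze_zero (fun k => (hHpos _).le) (fun k => ?_)
          tendsto_one_div_add_atTop_nhds_zero_nat
        calc H (p (φ k)) = H (y (φ k)) := hHproj _
          _ ≤ 1/((φ k : ℝ)+1) := (hHy _).le
          _ ≤ 1/((k:ℝ)+1) := by
              apply one_div_le_one_div_of_le (by positivity)
              have : (k:ℝ) ≤ (φ k : ℝ) := by exact_mod_cast hφmono.le_apply
              linarith
      have hFlim : Tendsto (fun k => ∑ a ∈ F, c a * r k a) atTop (𝓝 0) := by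
        have hsplit : ∀ k, ∑ a ∈ F, c a * r k a = H (p (φ k)) - ∑ a ∈ B \ F, c a * r k a := by
          intro k
          rw [← hHr k, ← Finset.sum_sdiff hFsub]
          ring
        simp only [hsplit]
        simpa using hHlim.sub (hlim_out c)
      have hFsum1 : Tendsto (fun k => ∑ a ∈ B \ F, r k a) atTop (𝓝 0) := by
        have h := hlim_out (fun _ => 1)
        simpa using h
      have hcardpos : (0:ℝ) < B.card := by
        exact_mod_cast Finset.card_pos.2 ⟨a₀, ha₀⟩
      have hev_big : ∀ᶠ k in atTop, ∃ b ∈ F, 1/(2 * (B.card:ℝ)) ≤ r k b := by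
        filter_upwards [hFsum1.eventually_lt_const (by norm_num : (0:ℝ) < 1/2)] with k hk
        by_contra hcon2
        push_neg at hcon2
        have h1 : ∑ b ∈ F, r k b < F.card * (1/(2 * (B.card:ℝ))) := by
          have h := Finset.sum_lt_sum_of_nonempty hFne (fun b hb => hcon2 b hb)
          simpa [Finset.sum_const, nsmul_eq_mul] using h
        have h2 : ∑ b ∈ F, r k b = 1 - ∑ b ∈ B \ F, r k b := by
          rw [← hrsum k, ← Finset.sum_sdiff hFsub]
          ring
        have h3 : (F.card : ℝ) ≤ (B.card : ℝ) := by
          exact_mod_cast Finset.card_le_card hFsub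
        have h2Bpos : (0:ℝ) < 2 * (B.card:ℝ) := by linarith
        have h4 : (F.card:ℝ) * (1/(2 * (B.card:ℝ))) ≤ 1/2 := by
          rw [mul_one_div, div_le_div_iff₀ h2Bpos (by norm_num : (0:ℝ) < 2)]
          linarith
        rw [h2] at h1
        linarith
      have hev_small : ∀ᶠ k in atTop,
          ∑ a ∈ F, c a * r k a < δF * (1/(2 * (B.card:ℝ))) :=
        hFlim.eventually_lt_const (mul_pos hδFpos (one_div_pos.2 (by linarith : (0:ℝ) < 2 * (B.card:ℝ))))
      obtain ⟨k, hbig, hsmall⟩ := (hev_big.and hev_small).exists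
      obtain ⟨b, hbF, hrb⟩ := hbig
      have hIH := hδF (p (φ k)) b hbF
      have hpos2 : 0 < rexp ⟪V bst, p (φ k)⟫ * D (p (φ k)) :=
        mul_pos (Real.exp_pos _) (hDpos' _)
      have hdivided : δF * r k b ≤ ∑ a ∈ F, c a * r k a := by
        have h := (div_le_div_iff_of_pos_right hpos2).2 hIH
        have hterm : ∀ a, c a * rexp ⟪V a, p (φ k)⟫ / (rexp ⟪V bst, p (φ k)⟫ * D (p (φ k)))
            = c a * r k a := by
          intro a
          simp only [hr]
          rw [inner_sub_left, Real.exp_sub, div_div, mul_div_assoc]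
        have hlhs : δF * rexp ⟪V b, p (φ k)⟫ / (rexp ⟪V bst, p (φ k)⟫ * D (p (φ k)))
            = δF * r k b := by
          simp only [hr]
          rw [inner_sub_left, Real.exp_sub, div_div, mul_div_assoc]
        rw [hlhs, Finset.sum_div] at h
        calc δF * r k b ≤ ∑ a ∈ F, c a * rexp ⟪V a, p (φ k)⟫ / (rexp ⟪V bst, p (φ k)⟫ * D (p (φ k))) := h
          _ = ∑ a ∈ F, c a * r k a := Finset.sum_congr rfl fun a _ => hterm a
      have hch : δF * (1/(2 * (B.card:ℝ))) ≤ δF * r k b :=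
        mul_le_mul_of_nonneg_left hrb hδFpos.le
      linarith

open scoped Classical in
/-- For a support set `A ⊂ ℕⁿ` with constant coordinate sum, a coefficient vector `c`
lies in the interior of the copositive cone `C_A` iff every facial restriction
`f_c|_w = Σ_{a∈A_w} c_a x^a` (where `A_w` is the set of `⟨w,·⟩`-minimizers in `A`)
is strictly positive on the open positive orthant. -/
theorem interior_copositive_cone_iff (n : ℕ) (A : Finset (Fin n → ℕ)) (hA : A.Nonempty)
    (hdeg : ∃ d : ℕ, ∀ a ∈ A, ∑ i, a i = d) (C : Set (↥A → ℝ))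
    (hC : C = {c : ↥A → ℝ | ∀ u : Fin n → ℝ, (∀ i, 0 ≤ u i) →
      0 ≤ ∑ a ∈ A.attach, c a * ∏ i, u i ^ a.1 i})
    (c : ↥A → ℝ) :
    c ∈ interior C ↔
      ∀ w : Fin n → ℝ, ∀ x : Fin n → ℝ, (∀ i, 0 < x i) →
        0 < ∑ a ∈ A.attach.filter (fun a => ∀ b ∈ A,
              ∑ i, w i * (a.1 i : ℝ) ≤ ∑ i, w i * (b i : ℝ)),
            c a * ∏ i, x i ^ a.1 i := by
  classical
  set V : ↥A → EuclideanSpace ℝ (Fin n) :=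
    fun a => WithLp.toLp 2 (fun i => (a.1 i : ℝ)) with hV
  have hinV : ∀ (w : EuclideanSpace ℝ (Fin n)) (a : ↥A),
      ⟪w, V a⟫ = ∑ i, w i * (a.1 i : ℝ) := by
    intro w a
    simp [hV, PiLp.inner_apply, mul_comm]
  have hinV2 : ∀ (a : ↥A) (y : EuclideanSpace ℝ (Fin n)),
      ⟪V a, y⟫ = ∑ i, (a.1 i : ℝ) * y i := by
    intro a y
    simp [hV, PiLp.inner_apply, mul_comm]
  constructor
  · -- interior → strict positivity on faces
    intro hint w x hx
    by_contra hle
    push_neg at hle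
    rw [mem_interior_iff_mem_nhds, Metric.mem_nhds_iff] at hint
    obtain ⟨ε, hε, hball⟩ := hint
    obtain ⟨a₁, ha₁A, ha₁min⟩ := A.exists_min_image (fun b => ∑ i, w i * (b i : ℝ)) hA
    set aone : ↥A := ⟨a₁, ha₁A⟩ with h_aone
    set c' : ↥A → ℝ := fun a => c a - if a = aone then ε/2 else 0 with hc'
    have hc'C : c' ∈ C := by
      apply hball
      rw [Metric.mem_ball, dist_pi_lt_iff hε]
      intro a
      rw [Real.dist_eq]
      simp only [hc']
      rcases eq_or_ne a aone with h|h
      · rw [if_pos h]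
        have h2 : c a - ε/2 - c a = -(ε/2) := by ring
        rw [h2, abs_neg, abs_of_pos (by linarith)]
        linarith
      · rw [if_neg h]
        simp [hε]
    rw [hC] at hc'C
    set Sw : ↥A → ℝ := fun a => ∑ i, w i * (a.1 i : ℝ) with hSw
    set mw : ℝ := ∑ i, w i * (a₁ i : ℝ) with hmw
    set Aw := A.attach.filter (fun a => ∀ b ∈ A,
        ∑ i, w i * (a.1 i : ℝ) ≤ ∑ i, w i * (b i : ℝ)) with hAw
    have hmemAw : ∀ a : ↥A, a ∈ Aw ↔ ∀ b ∈ A, Sw a ≤ ∑ i, w i * (b i : ℝ) := by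
      intro a
      rw [hAw, Finset.mem_filter]
      exact ⟨fun h => h.2, fun h => ⟨Finset.mem_attach _ _, h⟩⟩
    have h_aoneAw : aone ∈ Aw := (hmemAw aone).2 (fun b hb => ha₁min b hb)
    have hmem_eq : ∀ a : ↥A, a ∈ Aw → Sw a = mw := by
      intro a ha
      exact le_antisymm ((hmemAw a).1 ha a₁ ha₁A) (ha₁min a.1 a.2)
    have hmem_lt : ∀ a : ↥A, a ∉ Aw → mw < Sw a := by
      intro a ha
      rw [hmemAw] at ha
      push_neg at ha
      obtain ⟨b, hbA, hb⟩ := ha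
      exact lt_of_le_of_lt (ha₁min b hbA) hb
    set P : ↥A → ℝ := fun a => ∏ i, x i ^ a.1 i with hP
    have hPpos : ∀ a : ↥A, 0 < P a := fun a =>
      Finset.prod_pos fun i _ => pow_pos (hx i) _
    -- evaluation inequality
    have heval : ∀ t : ℝ, 1 ≤ t →
        0 ≤ ∑ a ∈ A.attach, c' a * (P a * t ^ (mw - Sw a)) := by
      intro t ht
      have htpos : (0:ℝ) < t := lt_of_lt_of_le one_pos ht
      have h := hc'C (fun i => x i * t ^ (-(w i)))
        (fun i => (mul_pos (hx i) (Real.rpow_pos_of_pos htpos _)).le)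
      have hprod : ∀ a : ↥A, ∏ i, (x i * t ^ (-(w i))) ^ a.1 i
          = P a * t ^ (-(Sw a)) := by
        intro a
        simp only [mul_pow]
        rw [Finset.prod_mul_distrib]
        congr 1
        have hfac : ∀ i : Fin n, (t ^ (-(w i))) ^ a.1 i
            = rexp (Real.log t * (-(w i) * (a.1 i : ℝ))) := by
          intro i
          rw [← Real.rpow_natCast (t ^ (-(w i))) (a.1 i), ← Real.rpow_mul htpos.le,
            Real.rpow_def_of_pos htpos]
        rw [Finset.prod_congr rfl (fun i _ => hfac i), ← Real.exp_sum,
          Real.rpow_def_of_pos htpos, ← Finset.mul_sum]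
        congr 1
        rw [hSw]
        simp only [neg_mul]
        rw [← Finset.sum_neg_distrib]
      have hsplit : ∀ a : ↥A, t ^ (-(Sw a)) = t ^ (-mw) * t ^ (mw - Sw a) := by
        intro a
        rw [← Real.rpow_add htpos]
        congr 1
        ring
      have hre : ∑ a ∈ A.attach, c' a * ∏ i, (x i * t ^ (-(w i))) ^ a.1 i
          = t ^ (-mw) * ∑ a ∈ A.attach, c' a * (P a * t ^ (mw - Sw a)) := by
        rw [Finset.mul_sum]
        refine Finset.sum_congr rfl fun a _ => ?_
        rw [hprod a, hsplit a]
        ring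
      rw [hre] at h
      exact (mul_nonneg_iff_of_pos_left (Real.rpow_pos_of_pos htpos _)).1 h
    -- limit
    set L : ℝ := ∑ a ∈ Aw, c' a * P a with hL
    have hLneg : L < 0 := by
      have hsum : L = (∑ a ∈ Aw, c a * P a) - (ε/2) * P aone := by
        rw [hL]
        simp only [hc', sub_mul]
        rw [Finset.sum_sub_distrib]
        congr 1
        have : ∀ a : ↥A, (if a = aone then ε/2 else 0) * P a
            = if a = aone then (ε/2) * P a else 0 := by
          intro a
          split <;> simp
        rw [Finset.sum_congr rfl fun a _ => this a, Finset.sum_ite_eq' Aw aone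
          (fun a => (ε/2) * P a), if_pos h_aoneAw]
      rw [hsum]
      have h1 : (∑ a ∈ Aw, c a * P a) ≤ 0 := hle
      have h2 : 0 < (ε/2) * P aone := mul_pos (by linarith) (hPpos aone)
      linarith
    have htend : Tendsto (fun t : ℝ => ∑ a ∈ A.attach, c' a * (P a * t ^ (mw - Sw a)))
        atTop (𝓝 L) := by
      have hAwsub : A.attach.filter (fun a => a ∈ Aw) = Aw := by
        rw [Finset.filter_mem_eq_inter, Finset.inter_eq_right]
        rw [hAw]
        exact Finset.filter_subset _ _
      have hLL : L = ∑ a ∈ A.attach, (if a ∈ Aw then c' a * P a else 0) := by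
        rw [hL, ← Finset.sum_filter, hAwsub]
      rw [hLL]
      refine tendsto_finset_sum _ fun a _ => ?_
      by_cases haw : a ∈ Aw
      · have h0 : mw - Sw a = 0 := by rw [hmem_eq a haw]; ring
        rw [if_pos haw]
        have : (fun t : ℝ => c' a * (P a * t ^ (mw - Sw a))) =ᶠ[atTop]
            (fun _ => c' a * P a) := by
          filter_upwards with t
          rw [h0, Real.rpow_zero, mul_one]
        exact Tendsto.congr' this.symm tendsto_const_nhds
      · have hneg : 0 < Sw a - mw := by
          have := hmem_lt a haw
          linarith
        rw [if_neg haw]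
        have h1 : Tendsto (fun t : ℝ => t ^ (-(Sw a - mw))) atTop (𝓝 0) :=
          tendsto_rpow_neg_atTop hneg
        have h2 : Tendsto (fun t : ℝ => c' a * (P a * t ^ (mw - Sw a))) atTop
            (𝓝 (c' a * (P a * 0))) := by
          apply tendsto_const_nhds.mul
          apply tendsto_const_nhds.mul
          have : mw - Sw a = -(Sw a - mw) := by ring
          rw [this]
          exact h1
        simpa using h2
    obtain ⟨t, ht1, hlt0⟩ := ((eventually_ge_atTop (1:ℝ)).and
      (htend.eventually_lt_const hLneg)).exists
    exact absurd (heval t ht1) (not_le.2 hlt0)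
  · -- strict positivity on faces → interior
    intro hpos
    have hAne : A.attach.Nonempty := Finset.attach_nonempty_iff.2 hA
    have hterm_exp : ∀ (a : ↥A) (y : EuclideanSpace ℝ (Fin n)),
        ∏ i, rexp (y i) ^ a.1 i = rexp ⟪V a, y⟫ := by
      intro a y
      rw [hinV2, Real.exp_sum]
      exact Finset.prod_congr rfl fun i _ => (Real.exp_nat_mul _ _).symm
    have HK : ∀ w y : EuclideanSpace ℝ (Fin n),
        0 < ∑ a ∈ A.attach.filter fun a => ∀ b ∈ A.attach, ⟪w, V a⟫ ≤ ⟪w, V b⟫,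
          c a * rexp ⟪V a, y⟫ := by
      intro w y
      have h := hpos (fun i => w i) (fun i => rexp (y i)) (fun i => Real.exp_pos _)
      have hfil : A.attach.filter (fun a => ∀ b ∈ A,
            ∑ i, w i * (a.1 i : ℝ) ≤ ∑ i, w i * (b i : ℝ))
          = A.attach.filter (fun a => ∀ b ∈ A.attach, ⟪w, V a⟫ ≤ ⟪w, V b⟫) := by
        refine Finset.filter_congr fun a _ => ?_
        constructor
        · intro hh b _
          rw [hinV, hinV]
          exact hh b.1 b.2
        · intro hh b hb
          have := hh ⟨b, hb⟩ (Finset.mem_attach _ _)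
          rwa [hinV, hinV] at this
      rw [hfil] at h
      have hsum : ∑ a ∈ A.attach.filter (fun a => ∀ b ∈ A.attach, ⟪w, V a⟫ ≤ ⟪w, V b⟫),
            c a * ∏ i, rexp (y i) ^ a.1 i
          = ∑ a ∈ A.attach.filter (fun a => ∀ b ∈ A.attach, ⟪w, V a⟫ ≤ ⟪w, V b⟫),
            c a * rexp ⟪V a, y⟫ :=
        Finset.sum_congr rfl fun a _ => by rw [hterm_exp a y]
      rw [← hsum]
      exact h
    obtain ⟨δ, hδpos, hδ⟩ := key_aux V c A.attach.card A.attach le_rfl hAne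
      (fun w y => by rw [filter_inst_eq]; exact HK w y)
    set K : ℝ := (A.card : ℝ) with hK
    have hKpos : (0:ℝ) < K := by
      rw [hK]
      exact_mod_cast Finset.card_pos.2 hA
    have hbridge : ∀ (u : Fin n → ℝ), (∀ i, 0 < u i) → ∀ a : ↥A,
        ∏ i, u i ^ a.1 i
          = rexp ⟪V a, (WithLp.toLp 2 (fun i => Real.log (u i)))⟫ := by
      intro u hu a
      rw [← hterm_exp a]
      exact Finset.prod_congr rfl fun i _ => by rw [Real.exp_log (hu i)]
    have hstep1 : ∀ u : Fin n → ℝ, (∀ i, 0 < u i) →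
        δ * ∑ a ∈ A.attach, ∏ i, u i ^ a.1 i
          ≤ K * ∑ a ∈ A.attach, c a * ∏ i, u i ^ a.1 i := by
      intro u hu
      set ylog : EuclideanSpace ℝ (Fin n) :=
        WithLp.toLp 2 (fun i => Real.log (u i)) with hylog
      have h1 : ∀ a₀ : ↥A, δ * ∏ i, u i ^ a₀.1 i
          ≤ ∑ a ∈ A.attach, c a * ∏ i, u i ^ a.1 i := by
        intro a₀
        rw [hbridge u hu a₀]
        calc δ * rexp ⟪V a₀, ylog⟫ ≤ ∑ a ∈ A.attach, c a * rexp ⟪V a, ylog⟫ :=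
              hδ ylog a₀ (Finset.mem_attach _ _)
          _ = ∑ a ∈ A.attach, c a * ∏ i, u i ^ a.1 i :=
              Finset.sum_congr rfl fun a _ => by rw [hbridge u hu a]
      calc δ * ∑ a ∈ A.attach, ∏ i, u i ^ a.1 i
          = ∑ a₀ ∈ A.attach, δ * ∏ i, u i ^ a₀.1 i := Finset.mul_sum _ _ _
        _ ≤ ∑ a₀ ∈ A.attach, ∑ a ∈ A.attach, c a * ∏ i, u i ^ a.1 i :=
            Finset.sum_le_sum fun a₀ _ => h1 a₀
        _ = K * ∑ a ∈ A.attach, c a * ∏ i, u i ^ a.1 i := by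
            rw [Finset.sum_const, Finset.card_attach, nsmul_eq_mul, hK]
    have hstep2 : ∀ u : Fin n → ℝ, (∀ i, 0 ≤ u i) →
        δ * ∑ a ∈ A.attach, ∏ i, u i ^ a.1 i
          ≤ K * ∑ a ∈ A.attach, c a * ∏ i, u i ^ a.1 i := by
      intro u hu
      set g : ℝ → ℝ := fun e =>
        K * (∑ a ∈ A.attach, c a * ∏ i, (u i + e) ^ a.1 i)
          - δ * ∑ a ∈ A.attach, ∏ i, (u i + e) ^ a.1 i with hg
      have hgcont : Continuous g := by
        rw [hg]
        apply Continuous.sub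
        · apply continuous_const.mul
          exact continuous_finset_sum _ fun a _ => continuous_const.mul
            (continuous_finset_prod _ fun i _ => (continuous_const.add continuous_id).pow _)
        · apply continuous_const.mul
          exact continuous_finset_sum _ fun a _ =>
            continuous_finset_prod _ fun i _ => (continuous_const.add continuous_id).pow _
      have hgnn : ∀ e ∈ Set.Ioi (0:ℝ), 0 ≤ g e := by
        intro e he
        rw [hg]
        have := hstep1 (fun i => u i + e) (fun i => by
          have := hu i
          have : (0:ℝ) < e := he
          positivity)
        simp only [sub_nonneg]
        exact this
      have hgt : Tendsto g (𝓝[>] (0:ℝ)) (𝓝 (g 0)) :=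
        (hgcont.tendsto 0).mono_left nhdsWithin_le_nhds
      have h0 : 0 ≤ g 0 := ge_of_tendsto hgt (eventually_nhdsWithin_of_forall hgnn)
      rw [hg] at h0
      simp only [add_zero] at h0
      linarith
    -- conclude interior membership
    rw [mem_interior_iff_mem_nhds, Metric.mem_nhds_iff]
    refine ⟨δ/K, div_pos hδpos hKpos, ?_⟩
    intro c'' hc''
    rw [Metric.mem_ball, dist_pi_lt_iff (div_pos hδpos hKpos)] at hc''
    have hbnd : ∀ a : ↥A, |c'' a - c a| ≤ δ/K := by
      intro a
      have := hc'' a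
      rw [Real.dist_eq] at this
      exact this.le
    rw [hC]
    intro u hu
    have hPnn : ∀ a : ↥A, 0 ≤ ∏ i, u i ^ a.1 i := fun a =>
      Finset.prod_nonneg fun i _ => pow_nonneg (hu i) _
    have h1 : ∑ a ∈ A.attach, c'' a * ∏ i, u i ^ a.1 i
        = (∑ a ∈ A.attach, c a * ∏ i, u i ^ a.1 i)
          + ∑ a ∈ A.attach, (c'' a - c a) * ∏ i, u i ^ a.1 i := by
      rw [← Finset.sum_add_distrib]
      exact Finset.sum_congr rfl fun a _ => by ring
    have h2 : -((δ/K) * ∑ a ∈ A.attach, ∏ i, u i ^ a.1 i)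
        ≤ ∑ a ∈ A.attach, (c'' a - c a) * ∏ i, u i ^ a.1 i := by
      rw [Finset.mul_sum, ← Finset.sum_neg_distrib]
      refine Finset.sum_le_sum fun a _ => ?_
      have ha := hbnd a
      have hp := hPnn a
      have : -(δ/K) ≤ c'' a - c a := by
        have := neg_abs_le (c'' a - c a)
        linarith
      nlinarith
    have h3 : (δ/K) * ∑ a ∈ A.attach, ∏ i, u i ^ a.1 i
        ≤ ∑ a ∈ A.attach, c a * ∏ i, u i ^ a.1 i := by
      have := hstep2 u hu
      rw [div_mul_eq_mul_div, div_le_iff₀ hKpos]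
      nlinarith
    rw [h1]
    linarith
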